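/- Let W be an integrable real random variable, α ∈ (0,1], and D, q real numbers with D < q such that P(W ≤ q) = α and E[W · 1_{W ≤ q}] = D·α. Then E[max(1 - (W - D)/(q - D), 0)] = α. -/

import Mathlib

open MeasureTheory

theorem stmt_7 {Ω : Type*} [MeasurableSpace Ω] (μ : Measure Ω) [IsProbabilityMeasure μ]
    (W : Ω → ℝ) (hW : Integrable W μ) (α : ℝ) (hα : α ∈ Set.Ioc (0 : ℝ) 1)
    (D q : ℝ) (hDq : D < q) (hq : (μ {ω | W ω ≤ q}).toReal = α)
    (hD : ∫ ω in {ω | W ω ≤ q}, W ω ∂μ = D * α) :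
    ∫ ω, max (1 - (W ω - D) / (q - D)) 0 ∂μ = α := by
  have hqD : (0:ℝ) < q - D := sub_pos.2 hDq
  obtain ⟨g, hgm, hgae⟩ := hW.1
  set s := {ω | W ω ≤ q} with hs
  set t := {ω | g ω ≤ q} with ht
  have htm : MeasurableSet t := measurableSet_le hgm.measurable measurable_const
  have hst : s =ᵐ[μ] t := by
    rw [Filter.eventuallyEq_set]
    filter_upwards [hgae] with ω hω
    simp [hs, ht, Set.mem_setOf_eq, hω]
  have hmin : Integrable (fun ω => min (W ω) q) μ := hW.inf (integrable_const q)
  have hμt : (μ t).toReal = α := by rw [← measure_congr hst, hq]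
  have hμtc : (μ tᶜ).toReal = 1 - α := by
    have := measure_compl htm (measure_ne_top μ t)
    rw [this]
    rw [ENNReal.toReal_sub_of_le (measure_mono (Set.subset_univ t)) (measure_ne_top μ _)]
    simp [hμt]
  have key : ∫ ω, min (W ω) q ∂μ = D * α + q * (1 - α) := by
    rw [← integral_add_compl htm hmin]
    have h1 : ∫ ω in t, min (W ω) q ∂μ = D * α := by
      have e1 : ∫ ω in t, min (W ω) q ∂μ = ∫ ω in t, W ω ∂μ := by
        apply setIntegral_congr_ae htm
        filter_upwards [hgae] with ω hω hωt
        simp only [ht, Set.mem_setOf_eq] at hωt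
        rw [min_eq_left (hω ▸ hωt)]
      rw [e1, setIntegral_congr_set hst.symm, hD]
    have h2 : ∫ ω in tᶜ, min (W ω) q ∂μ = q * (1 - α) := by
      have : ∫ ω in tᶜ, min (W ω) q ∂μ = ∫ _ω in tᶜ, q ∂μ := by
        apply setIntegral_congr_ae htm.compl
        filter_upwards [hgae] with ω hω hωt
        simp only [ht, Set.mem_compl_iff, Set.mem_setOf_eq, not_le] at hωt
        rw [min_eq_right (le_of_lt (hω ▸ hωt))]
      rw [this, setIntegral_const, smul_eq_mul, Measure.real, hμtc, mul_comm]
    rw [h1, h2]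
  have hptw : ∀ ω, max (1 - (W ω - D) / (q - D)) 0 = (q - min (W ω) q) / (q - D) := by
    intro ω
    rcases le_total (W ω) q with h | h
    · rw [min_eq_left h, max_eq_left]
      · field_simp
        ring
      · rw [sub_nonneg, div_le_one hqD]
        linarith
    · rw [min_eq_right h, sub_self, zero_div, max_eq_right]
      rw [sub_nonpos, le_div_iff₀ hqD]
      linarith
  simp_rw [hptw]
  rw [integral_div]
  have : ∫ ω, (q - min (W ω) q) ∂μ = α * (q - D) := by
    rw [integral_sub (integrable_const q) hmin, key, integral_const]
    simp
    ring
  rw [this, mul_div_assoc, div_self hqD.ne', mul_one]
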